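/- Let E ⊆ ℝ^ℓ be a convex set contained in an affine hyperplane {v : u·v = 1} for some linear functional u on ℝ^ℓ, and let ē ∈ ℝ^ℓ. Let e : Fin n → ℝ^ℓ be a linearly independent family such that every e y is an extreme point of E, and let p : Fin n → ℝ satisfy p y > 0 for all y and ∑_y p y • e y = ē. Then f : Fin n → ℝ^ℓ defined by f y = p y • e y is an extreme point of M_n(E,ē). -/

import Mathlib

open Matrix Finset

/-- The set of `n`-outcome measurements with normalized effects in `E` and unit
effect `ebar`. -/
def Measurements {ℓ : ℕ} (n : ℕ) (E : Set (Fin ℓ → ℝ)) (ebar : Fin ℓ → ℝ) :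
    Set (Fin n → Fin ℓ → ℝ) :=
  {f | (∀ y, ∃ t : ℝ, 0 ≤ t ∧ ∃ c ∈ E, f y = t • c) ∧ ∑ y, f y = ebar}

private lemma aux_eq {ℓ : ℕ} {E : Set (Fin ℓ → ℝ)} {u : (Fin ℓ → ℝ) →ₗ[ℝ] ℝ}
    (hu : ∀ v ∈ E, u v = 1) {x : Fin ℓ → ℝ} (hx : x ∈ Set.extremePoints ℝ E)
    {px : ℝ} (hpx : 0 < px) {gy hy : Fin ℓ → ℝ}
    (hg : ∃ t : ℝ, 0 ≤ t ∧ ∃ c ∈ E, gy = t • c)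
    (hh : ∃ t : ℝ, 0 ≤ t ∧ ∃ c ∈ E, hy = t • c)
    {a b : ℝ} (ha : 0 < a) (hb : 0 < b)
    (hsum : a • gy + b • hy = px • x) :
    gy = u gy • x := by
  obtain ⟨s, hs0, c, hc, rfl⟩ := hg
  obtain ⟨r, hr0, d, hd, rfl⟩ := hh
  have hux : u x = 1 := hu _ hx.1
  have huc : u c = 1 := hu _ hc
  have hud : u d = 1 := hu _ hd
  have hugy : u (s • c) = s := by simp [huc]
  rw [hugy]
  rcases eq_or_lt_of_le hs0 with hs | hs
  · simp [← hs]
  have hkey : a * s + b * r = px := by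
    have := congrArg u hsum
    simpa [map_add, _root_.map_smul, huc, hud, hux] using this
  have hcx : c = x := by
    rcases eq_or_lt_of_le hr0 with hr | hr
    · -- r = 0
      have h1 : (a * s) • c = px • x := by
        rw [← hsum, ← hr]; simp [smul_smul]
      have hpx' : a * s = px := by rw [← hkey, ← hr]; ring
      rw [hpx'] at h1
      exact smul_right_injective _ (ne_of_gt hpx) h1
    · -- r > 0
      have hmem : x ∈ openSegment ℝ c d := by
        refine ⟨a * s / px, b * r / px, by positivity, by positivity, ?_, ?_⟩
        · field_simp
          linarith
        · apply smul_right_injective (Fin ℓ → ℝ) (ne_of_gt hpx)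
          show px • ((a * s / px) • c + (b * r / px) • d) = px • x
          rw [smul_add, smul_smul, smul_smul]
          rw [mul_div_cancel₀ _ (ne_of_gt hpx), mul_div_cancel₀ _ (ne_of_gt hpx)]
          rw [← hsum]
          rw [smul_smul, smul_smul]
      exact hx.2 hc hd hmem
  rw [hcx]

/-- a measurement whose effects are positive multiples of a
linearly independent family of extreme points of `E` is an extreme point of
the set of measurements. -/
theorem extremal_measurement_of_linearIndependent
    {ℓ n : ℕ} (E : Set (Fin ℓ → ℝ)) (hE : Convex ℝ E)
    (u : (Fin ℓ → ℝ) →ₗ[ℝ] ℝ) (hu : ∀ v ∈ E, u v = 1)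
    (ebar : Fin ℓ → ℝ) (e : Fin n → Fin ℓ → ℝ)
    (hind : LinearIndependent ℝ e)
    (he : ∀ y, e y ∈ Set.extremePoints ℝ E)
    (p : Fin n → ℝ) (hp : ∀ y, 0 < p y)
    (hsum : ∑ y, p y • e y = ebar)
    (f : Fin n → Fin ℓ → ℝ) (hf : ∀ y, f y = p y • e y) :
    f ∈ Set.extremePoints ℝ (Measurements n E ebar) := by
  have heE : ∀ y, e y ∈ E := fun y => (he y).1
  constructor
  · exact ⟨fun y => ⟨p y, (hp y).le, e y, heE y, hf y⟩, by simpa only [← hf] using hsum⟩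
  · rintro g hg h hh ⟨a, b, ha, hb, hab, habf⟩
    -- for each y, g y and h y are multiples of e y
    clear hab
    have key : ∀ (a b : ℝ), 0 < a → 0 < b →
        ∀ (g' h' : Fin n → Fin ℓ → ℝ), g' ∈ Measurements n E ebar →
        h' ∈ Measurements n E ebar → a • g' + b • h' = f → g' = f := by
      intro a b ha hb g' h' hg' hh' habf'
      have hge : ∀ y, g' y = u (g' y) • e y := by
        intro y
        refine aux_eq hu (he y) (hp y) (hg'.1 y) (hh'.1 y) ha hb ?_
        have := congrFun habf' y
        simpa [hf y] using this
      -- sum condition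
      have hsg : ∑ y, u (g' y) • e y = ∑ y, p y • e y := by
        rw [hsum]
        calc ∑ y, u (g' y) • e y = ∑ y, g' y := by
              exact Finset.sum_congr rfl fun y _ => (hge y).symm
          _ = ebar := hg'.2
      have hzero : ∑ y, (u (g' y) - p y) • e y = 0 := by
        simp only [sub_smul, Finset.sum_sub_distrib, hsg, sub_self]
      have := Fintype.linearIndependent_iff.mp hind _ hzero
      funext y
      have hy0 : u (g' y) = p y := by
        have := this y
        linarith
      rw [hge y, hy0, hf y]
    exact key a b ha hb g h hg hh habf
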